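/- For n ≥ 1, let Δ_{M,1/(n+1)} be the set of vectors (p_0,…,p_M) ∈ ℝ^{M+1} with 0 ≤ p_k ≤ n/(n+1) for all k and Σ p_k = 1. For distinct k_1, k_2 ∈ {0,…,M}, let v_{n,k_1,k_2} ∈ ℝ^{M+1} be the vector whose k_1-entry is n/(n+1), whose k_2-entry is 1/(n+1), and all other entries are 0. Then Δ_{M,1/(n+1)} is contained in the convex hull of the finite set {v_{n,k_1,k_2} : k_1 ≠ k_2}. -/

import Mathlib

open Set Finset

lemma simplex_extreme_sub (M n : ℕ) (hn : 1 ≤ n)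
    (p : Fin (M + 1) → ℝ)
    (hp : p ∈ Set.extremePoints ℝ
      {p : Fin (M + 1) → ℝ |
        (∀ k, 0 ≤ p k ∧ p k ≤ (n : ℝ) / (n + 1)) ∧ ∑ k, p k = 1}) :
    p ∈ {v : Fin (M + 1) → ℝ | ∃ k₁ k₂ : Fin (M + 1), k₁ ≠ k₂ ∧
          v = fun j => if j = k₁ then (n : ℝ) / (n + 1)
                       else if j = k₂ then 1 / (n + 1) else 0} := by
  classical
  set u : ℝ := (n : ℝ) / (n + 1) with hu
  have hn1 : (1 : ℝ) ≤ (n : ℝ) := by exact_mod_cast hn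
  have hpos : (0 : ℝ) < (n : ℝ) + 1 := by linarith
  have hu1 : u < 1 := by rw [hu, div_lt_one hpos]; linarith
  have hu0 : 0 < u := by positivity
  have huc : u + 1 / ((n : ℝ) + 1) = 1 := by rw [hu]; field_simp
  obtain ⟨⟨hb, hs⟩, hext⟩ := hp
  -- Claim: at most one coordinate is strictly inside (0, u)
  have C1 : ∀ i j : Fin (M + 1), i ≠ j → 0 < p i → p i < u → 0 < p j → p j < u → False := by
    intro i j hij h1 h2 h3 h4
    set ε : ℝ := min (min (p i) (u - p i)) (min (p j) (u - p j)) with hε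
    have hε0 : 0 < ε := by
      simp only [hε, lt_min_iff]; refine ⟨⟨h1, by linarith⟩, h3, by linarith⟩
    have hεi1 : ε ≤ p i := (min_le_left _ _).trans (min_le_left _ _)
    have hεi2 : ε ≤ u - p i := (min_le_left _ _).trans (min_le_right _ _)
    have hεj1 : ε ≤ p j := (min_le_right _ _).trans (min_le_left _ _)
    have hεj2 : ε ≤ u - p j := (min_le_right _ _).trans (min_le_right _ _)
    set x : Fin (M + 1) → ℝ :=
      fun k => p k + (if k = i then ε else 0) - (if k = j then ε else 0) with hx
    set y : Fin (M + 1) → ℝ :=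
      fun k => p k - (if k = i then ε else 0) + (if k = j then ε else 0) with hy
    have hxmem : x ∈ {p : Fin (M + 1) → ℝ |
        (∀ k, 0 ≤ p k ∧ p k ≤ (n : ℝ) / (n + 1)) ∧ ∑ k, p k = 1} := by
      constructor
      · intro k
        rcases eq_or_ne k i with rfl | hki
        · simp [hx, if_neg hij]; constructor <;> [linarith [(hb k).1]; linarith]
        · rcases eq_or_ne k j with rfl | hkj
          · simp [hx, if_neg hki]; constructor <;> [linarith; linarith [(hb k).2]]
          · simpa [hx, if_neg hki, if_neg hkj] using hb k
      · simp only [hx, Finset.sum_sub_distrib, Finset.sum_add_distrib,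
          Finset.sum_ite_eq' Finset.univ, Finset.mem_univ, if_true, hs]
        ring
    have hymem : y ∈ {p : Fin (M + 1) → ℝ |
        (∀ k, 0 ≤ p k ∧ p k ≤ (n : ℝ) / (n + 1)) ∧ ∑ k, p k = 1} := by
      constructor
      · intro k
        rcases eq_or_ne k i with rfl | hki
        · simp [hy, if_neg hij]; constructor <;> [linarith; linarith [(hb k).2]]
        · rcases eq_or_ne k j with rfl | hkj
          · simp [hy, if_neg hki]; constructor <;> [linarith [(hb k).1]; linarith]
          · simpa [hy, if_neg hki, if_neg hkj] using hb k
      · simp only [hy, Finset.sum_sub_distrib, Finset.sum_add_distrib,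
          Finset.sum_ite_eq' Finset.univ, Finset.mem_univ, if_true, hs]
        ring
    have hmid : p ∈ openSegment ℝ x y := by
      refine ⟨1/2, 1/2, by norm_num, by norm_num, by norm_num, ?_⟩
      funext k
      simp only [hx, hy, Pi.add_apply, Pi.smul_apply, smul_eq_mul]
      ring
    have heq := hext hxmem hymem hmid
    have hxi : x i = p i := by rw [heq]
    have : p i + ε = p i := by simpa [hx, hij] using hxi
    linarith
  set B : Finset (Fin (M + 1)) :=
    Finset.univ.filter (fun k => p k ≠ 0 ∧ p k ≠ u) with hB
  have hBcard : B.card ≤ 1 := by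
    refine Finset.card_le_one.2 fun a ha b hb' => ?_
    simp only [hB, Finset.mem_filter] at ha hb'
    by_contra hab
    exact C1 a b hab (lt_of_le_of_ne (hb a).1 (Ne.symm ha.2.1))
      (lt_of_le_of_ne (hb a).2 ha.2.2) (lt_of_le_of_ne (hb b).1 (Ne.symm hb'.2.1))
      (lt_of_le_of_ne (hb b).2 hb'.2.2)
  set A : Finset (Fin (M + 1)) := Finset.univ.filter (fun k => p k = u) with hA
  have hsplit : (A.card : ℝ) * u + ∑ k ∈ Finset.univ.filter (fun k => ¬ p k = u), p k = 1 := by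
    rw [← hs, ← Finset.sum_filter_add_sum_filter_not Finset.univ (fun k => p k = u)]
    congr 1
    rw [Finset.sum_congr rfl (fun k hk => (Finset.mem_filter.1 hk).2)]
    rw [Finset.sum_const, nsmul_eq_mul]
  rcases B.eq_empty_or_nonempty with hBe | ⟨k0, hk0⟩
  · -- all coordinates are 0 or u
    have hall : ∀ k, p k = 0 ∨ p k = u := by
      intro k
      by_contra hk
      push_neg at hk
      have : k ∈ B := by simp [hB, hk.1, hk.2]
      simp [hBe] at this
    have hz : ∑ k ∈ Finset.univ.filter (fun k => ¬ p k = u), p k = 0 := by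
      refine Finset.sum_eq_zero fun k hk => ?_
      rcases hall k with h | h
      · exact h
      · exact absurd h (Finset.mem_filter.1 hk).2
    rw [hz, add_zero] at hsplit
    have hcard : A.card * n = n + 1 := by
      have : (A.card : ℝ) * n = n + 1 := by
        rw [hu] at hsplit
        field_simp at hsplit
        linarith
      exact_mod_cast this
    have hdvd : n ∣ n + 1 := ⟨A.card, by rw [← hcard]; ring⟩
    have hnd : n ∣ 1 := (Nat.dvd_add_right (dvd_refl n)).mp hdvd
    have hn1' : n = 1 := Nat.dvd_one.mp hnd
    have hA2 : A.card = 2 := by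
      have h' : A.card * n = n + 1 := hcard
      rw [hn1'] at h'
      omega
    obtain ⟨k1, hk1, k2, hk2, h12⟩ := Finset.one_lt_card.1 (by omega : 1 < A.card)
    have hAeq : A = {k1, k2} := by
      refine (Finset.eq_of_subset_of_card_le ?_ ?_).symm
      · intro x hx
        simp only [Finset.mem_insert, Finset.mem_singleton] at hx
        rcases hx with rfl | rfl <;> assumption
      · rw [hA2, Finset.card_insert_of_notMem (by simp [h12]), Finset.card_singleton]
    refine ⟨k1, k2, h12, funext fun j => ?_⟩
    have huv : u = 1 / ((n : ℝ) + 1) := by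
      rw [hu, hn1']; norm_num
    rcases eq_or_ne j k1 with rfl | hj1
    · simp only [if_pos rfl]
      exact (Finset.mem_filter.1 hk1).2
    · rcases eq_or_ne j k2 with rfl | hj2
      · simp only [if_neg hj1, if_pos rfl, ← huv]
        exact (Finset.mem_filter.1 hk2).2
      · simp only [if_neg hj1, if_neg hj2]
        rcases hall j with h | h
        · exact h
        · exfalso
          have : j ∈ A := by simp [hA, h]
          rw [hAeq] at this
          simp [hj1, hj2] at this
    
  · -- exactly one coordinate strictly inside
    have hBs : B = {k0} := by
      refine Finset.eq_singleton_iff_unique_mem.2 ⟨hk0, fun x hx => ?_⟩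
      exact Finset.card_le_one.1 hBcard x hx k0 hk0
    simp only [hB, Finset.mem_filter, Finset.mem_univ, true_and] at hk0
    have hk01 : 0 < p k0 := lt_of_le_of_ne (hb k0).1 (Ne.symm hk0.1)
    have hk02 : p k0 < u := lt_of_le_of_ne (hb k0).2 hk0.2
    have hrest : ∀ k, k ≠ k0 → p k = 0 ∨ p k = u := by
      intro k hk
      by_contra h
      push_neg at h
      have : k ∈ B := by simp [hB, h.1, h.2]
      rw [hBs, Finset.mem_singleton] at this
      exact hk this
    have hz : ∑ k ∈ Finset.univ.filter (fun k => ¬ p k = u), p k = p k0 := by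
      refine Finset.sum_eq_single_of_mem k0 (by simp [hk0.2]) fun k hk hkk0 => ?_
      rcases hrest k hkk0 with h | h
      · exact h
      · exact absurd h (Finset.mem_filter.1 hk).2
    rw [hz] at hsplit
    -- A.card = 1
    have hc0 : A.card ≠ 0 := by
      intro h
      rw [h] at hsplit
      simp at hsplit
      linarith
    have hc2 : A.card < 2 := by
      by_contra h
      push_neg at h
      have : (2 : ℝ) ≤ (A.card : ℝ) := by exact_mod_cast h
      have h2u : 1 ≤ 2 * u := by
        rw [hu, ← mul_div_assoc, le_div_iff₀ hpos]; linarith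
      nlinarith
    have hc1 : A.card = 1 := by omega
    obtain ⟨k1, hk1⟩ := Finset.card_eq_one.1 hc1
    have hk1A : k1 ∈ A := by rw [hk1]; exact Finset.mem_singleton_self k1
    have hpk1 : p k1 = u := (Finset.mem_filter.1 hk1A).2
    have hk10 : k1 ≠ k0 := by
      intro h
      rw [h] at hpk1
      exact hk0.2 hpk1
    have hpk0 : p k0 = 1 / ((n : ℝ) + 1) := by
      rw [hk1, Finset.card_singleton] at hsplit
      push_cast at hsplit
      linarith [huc]
    refine ⟨k1, k0, hk10, funext fun j => ?_⟩
    rcases eq_or_ne j k1 with rfl | hj1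
    · simp only [if_pos rfl]; exact hpk1
    · rcases eq_or_ne j k0 with rfl | hj0
      · simp only [if_neg hj1, if_pos rfl]; exact hpk0
      · simp only [if_neg hj1, if_neg hj0]
        rcases hrest j hj0 with h | h
        · exact h
        · exfalso
          have : j ∈ A := by simp [hA, h]
          rw [hk1, Finset.mem_singleton] at this
          exact hj1 this

/-- For `M ≥ 1` and `n ≥ 1`, the set `Δ_{M,1/(n+1)}` of probability vectors in
`ℝ^{M+1}` with entries at most `n/(n+1)` is contained in the convex hull of
the vectors `v_{n,k₁,k₂}` (for `k₁ ≠ k₂`) whose `k₁`-entry is `n/(n+1)`,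
whose `k₂`-entry is `1/(n+1)`, and whose other entries vanish. -/
theorem simplex_subset_convexHull (M n : ℕ) (hM : 1 ≤ M) (hn : 1 ≤ n) :
    {p : Fin (M + 1) → ℝ |
        (∀ k, 0 ≤ p k ∧ p k ≤ (n : ℝ) / (n + 1)) ∧ ∑ k, p k = 1} ⊆
      convexHull ℝ
        {v : Fin (M + 1) → ℝ | ∃ k₁ k₂ : Fin (M + 1), k₁ ≠ k₂ ∧
          v = fun j => if j = k₁ then (n : ℝ) / (n + 1)
                       else if j = k₂ then 1 / (n + 1) else 0} := by
  classical
  set s : Set (Fin (M + 1) → ℝ) :=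
    {p : Fin (M + 1) → ℝ |
        (∀ k, 0 ≤ p k ∧ p k ≤ (n : ℝ) / (n + 1)) ∧ ∑ k, p k = 1} with hsdef
  set V : Set (Fin (M + 1) → ℝ) :=
    {v : Fin (M + 1) → ℝ | ∃ k₁ k₂ : Fin (M + 1), k₁ ≠ k₂ ∧
          v = fun j => if j = k₁ then (n : ℝ) / (n + 1)
                       else if j = k₂ then 1 / (n + 1) else 0} with hVdef
  have hVfin : V.Finite := by
    have : V ⊆ Set.range (fun q : Fin (M + 1) × Fin (M + 1) =>
        fun j => if j = q.1 then (n : ℝ) / (n + 1)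
                 else if j = q.2 then 1 / (n + 1) else 0) := by
      rintro v ⟨k₁, k₂, _, rfl⟩
      exact ⟨(k₁, k₂), rfl⟩
    exact (Set.finite_range _).subset this
  have hclosed : IsClosed s := by
    have h1 : IsClosed {p : Fin (M + 1) → ℝ | ∀ k, 0 ≤ p k ∧ p k ≤ (n : ℝ) / (n + 1)} := by
      rw [Set.setOf_forall]
      refine isClosed_iInter fun k => ?_
      have he : {p : Fin (M + 1) → ℝ | 0 ≤ p k ∧ p k ≤ (n : ℝ) / (n + 1)}
          = {p : Fin (M + 1) → ℝ | 0 ≤ p k} ∩ {p : Fin (M + 1) → ℝ | p k ≤ (n : ℝ) / (n + 1)} := rfl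
      rw [he]
      exact (isClosed_le continuous_const (continuous_apply k)).inter
        (isClosed_le (continuous_apply k) continuous_const)
    have h2 : IsClosed {p : Fin (M + 1) → ℝ | ∑ k, p k = 1} :=
      isClosed_eq (by continuity) continuous_const
    have he : s = {p : Fin (M + 1) → ℝ | ∀ k, 0 ≤ p k ∧ p k ≤ (n : ℝ) / (n + 1)}
        ∩ {p : Fin (M + 1) → ℝ | ∑ k, p k = 1} := rfl
    rw [he]
    exact h1.inter h2
  have hu1 : (n : ℝ) / (n + 1) ≤ 1 := by
    rw [div_le_one (by positivity)]; linarith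
  have hcomp : IsCompact s := by
    refine IsCompact.of_isClosed_subset (isCompact_Icc (a := (0 : Fin (M + 1) → ℝ)) (b := 1))
      hclosed ?_
    rintro p ⟨hb, -⟩
    refine ⟨fun k => (hb k).1, fun k => (hb k).2.trans hu1⟩
  have hconv : Convex ℝ s := by
    intro x hx y hy a b ha hb hab
    obtain ⟨hxb, hxs⟩ := hx
    obtain ⟨hyb, hys⟩ := hy
    refine ⟨fun k => ⟨?_, ?_⟩, ?_⟩
    · have := (hxb k).1; have := (hyb k).1
      simp only [Pi.add_apply, Pi.smul_apply, smul_eq_mul]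
      nlinarith
    · have := (hxb k).2; have := (hyb k).2
      simp only [Pi.add_apply, Pi.smul_apply, smul_eq_mul]
      nlinarith
    · simp only [Pi.add_apply, Pi.smul_apply, smul_eq_mul]
      rw [Finset.sum_add_distrib, ← Finset.mul_sum, ← Finset.mul_sum, hxs, hys]
      linarith
  have hKM := closure_convexHull_extremePoints hcomp hconv
  have hsub : convexHull ℝ (s.extremePoints ℝ) ⊆ convexHull ℝ V :=
    convexHull_mono (fun q hq => simplex_extreme_sub M n hn q hq)
  intro p hp
  have hp' : p ∈ closure (convexHull ℝ (s.extremePoints ℝ)) := by rw [hKM]; exact hp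
  have := closure_mono hsub hp'
  rwa [(hVfin.isClosed_convexHull ℝ).closure_eq] at this
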